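/- arXiv:1810.12412 — 2 statements merged into one kernel-verified Lean document; each statement's English description precedes it below -/
import Mathlib

section
/- For $\lambda > 0$ and a rectangular parallelotope $\mathsf{P} = [0,s_1]\times\cdots\times[0,s_n]$, the generating-function identity holds: $\int_{\mathbb{R}^n} e^{-\lambda^2 \pi\, \mathrm{dist}^2(x,\mathsf{P})}\, dx = \lambda^{-n} \prod_{i=1}^n (1 + \lambda s_i)$. -/
open MeasureTheory Set Real

/-- Clamp of `t` to `[0,s]`. -/
private lemma clamp_mem {s : ℝ} (hs : 0 ≤ s) (t : ℝ) :
    max 0 (min t s) ∈ Set.Icc 0 s :=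
  ⟨le_max_left _ _, max_le hs (min_le_right _ _)⟩

private lemma clamp_abs_le {s : ℝ} (hs : 0 ≤ s) (t y : ℝ) (hy : y ∈ Set.Icc 0 s) :
    |t - max 0 (min t s)| ≤ |t - y| := by
  obtain ⟨hy0, hys⟩ := hy
  rcases le_total t 0 with ht | ht
  · rw [min_eq_left (ht.trans hs), max_eq_left ht, sub_zero, abs_of_nonpos ht,
      abs_of_nonpos (by linarith)]
    linarith
  rcases le_total t s with hts | hts
  · rw [min_eq_left hts, max_eq_right ht, sub_self, abs_zero]
    positivity
  · rw [min_eq_right hts, max_eq_right hs, abs_of_nonneg (by linarith),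
      abs_of_nonneg (by linarith)]
    linarith

/-- The one-dimensional integral. -/
private lemma oneDim_integral (a : ℝ) (ha : 0 < a) {s : ℝ} (hs : 0 ≤ s) :
    ∫ t : ℝ, Real.exp (-a * (t - max 0 (min t s)) ^ 2) = s + Real.sqrt (π / a) := by
  set f : ℝ → ℝ := fun t => Real.exp (-a * (t - max 0 (min t s)) ^ 2) with hf
  have hint : Integrable fun t : ℝ => Real.exp (-a * t ^ 2) := integrable_exp_neg_mul_sq ha
  -- the three pieces agree with simpler functions
  have hIic : EqOn f (fun t => Real.exp (-a * t ^ 2)) (Iic 0) := by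
    intro t ht
    simp only [mem_Iic] at ht
    simp only [f, min_eq_left (ht.trans hs), max_eq_left ht, sub_zero]
  have hIoc : EqOn f (fun _ => (1 : ℝ)) (Ioc 0 s) := by
    intro t ht
    obtain ⟨ht0, hts⟩ := ht
    simp only [f, min_eq_left hts, max_eq_right ht0.le, sub_self]
    norm_num
  have hIoi : EqOn f (fun t => Real.exp (-a * (t - s) ^ 2)) (Ioi s) := by
    intro t ht
    simp only [mem_Ioi] at ht
    simp only [f, min_eq_right ht.le, max_eq_right hs]
  -- integrability on pieces
  have hintIic : IntegrableOn f (Iic 0) :=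
    (hint.integrableOn.congr_fun hIic.symm measurableSet_Iic)
  have hintIoc : IntegrableOn f (Ioc 0 s) :=
    ((integrableOn_const (by simp) (by simp)).congr_fun hIoc.symm measurableSet_Ioc)
  have hshift : Integrable fun t : ℝ => Real.exp (-a * (t - s) ^ 2) := hint.comp_sub_right s
  have hintIoi : IntegrableOn f (Ioi s) :=
    (hshift.integrableOn.congr_fun hIoi.symm measurableSet_Ioi)
  have hintIoi0 : IntegrableOn f (Ioi 0) := by
    rw [← Ioc_union_Ioi_eq_Ioi hs]
    exact hintIoc.union hintIoi
  -- split the integral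
  have hsplit : ∫ t : ℝ, f t = (∫ t in Iic (0:ℝ), f t) + ∫ t in Ioi (0:ℝ), f t := by
    rw [← setIntegral_union (Iic_disjoint_Ioi le_rfl) measurableSet_Ioi hintIic hintIoi0,
      Iic_union_Ioi, setIntegral_univ]
  have hsplit2 : ∫ t in Ioi (0:ℝ), f t = (∫ t in Ioc (0:ℝ) s, f t) + ∫ t in Ioi s, f t := by
    rw [← setIntegral_union (Ioc_disjoint_Ioi le_rfl) measurableSet_Ioi hintIoc hintIoi,
      Ioc_union_Ioi_eq_Ioi hs]
  -- compute each piece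
  have h1 : ∫ t in Iic (0:ℝ), f t = Real.sqrt (π / a) / 2 := by
    rw [setIntegral_congr_fun measurableSet_Iic hIic]
    have := integral_comp_neg_Iic (0 : ℝ) (fun t => Real.exp (-a * t ^ 2))
    simp only [neg_zero, neg_sq] at this
    rw [this, integral_gaussian_Ioi]
  have h2 : ∫ t in Ioc (0:ℝ) s, f t = s := by
    rw [setIntegral_congr_fun measurableSet_Ioc hIoc]
    simp [Real.volume_Ioc, ENNReal.toReal_ofReal hs, hs]
  have h3 : ∫ t in Ioi s, f t = Real.sqrt (π / a) / 2 := by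
    rw [setIntegral_congr_fun measurableSet_Ioi hIoi]
    have A : MeasurableEmbedding fun x : ℝ => x + s :=
      (Homeomorph.addRight s).isClosedEmbedding.measurableEmbedding
    have hmap := A.setIntegral_map (μ := volume)
      (fun t => Real.exp (-a * (t - s) ^ 2)) (Ioi s)
    rw [MeasureTheory.Measure.IsAddRightInvariant.map_add_right_eq_self (μ := (volume : Measure ℝ)) s] at hmap
    have hpre : (fun x : ℝ => x + s) ⁻¹' Ioi s = Ioi 0 := by
      ext x; simp [mem_Ioi]
    rw [hmap, hpre]
    simp only [add_sub_cancel_right]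
    rw [integral_gaussian_Ioi]
  rw [hsplit, hsplit2, h1, h2, h3]
  ring

/-- Generating-function identity for a rectangular parallelotope:
`∫ e^{-λ²π dist²(x,P)} dx = λ^{-n} ∏ (1 + λ sᵢ)`. -/
theorem gf_dist_integral_parallelotope (n : ℕ) (lam : ℝ) (hlam : 0 < lam)
    (s : Fin n → ℝ) (hs : ∀ i, 0 ≤ s i) :
    ∫ x : EuclideanSpace ℝ (Fin n),
        Real.exp (-(lam ^ 2) * Real.pi *
          Metric.infDist x (WithLp.ofLp ⁻¹' (Set.pi Set.univ fun i => Set.Icc 0 (s i))) ^ 2)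
      = lam ^ (-(n : ℤ)) * ∏ i, (1 + lam * s i) := by
  set P : Set (EuclideanSpace ℝ (Fin n)) := WithLp.ofLp ⁻¹' (Set.pi Set.univ fun i => Set.Icc 0 (s i)) with hP
  have hPne : P.Nonempty := ⟨(0 : EuclideanSpace ℝ (Fin n)), by
    intro i _; exact ⟨le_rfl, hs i⟩⟩
  -- squared distance to P is the sum of squared coordinate clamp distances
  have key : ∀ x : EuclideanSpace ℝ (Fin n),
      Metric.infDist x P ^ 2 = ∑ i, (x i - max 0 (min (x i) (s i))) ^ 2 := by
    intro x
    set y₀ : EuclideanSpace ℝ (Fin n) := WithLp.toLp 2 fun i => max 0 (min (x i) (s i)) with hy₀def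
    have hy₀mem : y₀ ∈ P := by
      intro i _
      exact clamp_mem (hs i) (x i)
    have hmin : ∀ y ∈ P, dist x y₀ ≤ dist x y := by
      intro y hy
      rw [EuclideanSpace.dist_eq, EuclideanSpace.dist_eq]
      apply Real.sqrt_le_sqrt
      apply Finset.sum_le_sum
      intro i _
      have hyi : y i ∈ Set.Icc 0 (s i) := hy i (Set.mem_univ i)
      have := clamp_abs_le (hs i) (x i) (y i) hyi
      simp only [Real.dist_eq]
      exact pow_le_pow_left₀ (abs_nonneg _) this 2
    have hdist : Metric.infDist x P = dist x y₀ := by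
      refine le_antisymm (Metric.infDist_le_dist_of_mem hy₀mem) ?_
      by_contra h
      push_neg at h
      obtain ⟨y, hy, hlt⟩ := (Metric.infDist_lt_iff hPne).1 h
      exact absurd (hmin y hy) (not_le.2 hlt)
    rw [hdist, EuclideanSpace.dist_eq, Real.sq_sqrt (Finset.sum_nonneg fun i _ => sq_nonneg _)]
    refine Finset.sum_congr rfl fun i _ => ?_
    rw [Real.dist_eq, sq_abs]
  -- rewrite the integrand as a product
  have hrw : ∀ x : EuclideanSpace ℝ (Fin n),
      Real.exp (-(lam ^ 2) * Real.pi * Metric.infDist x P ^ 2)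
        = ∏ i, Real.exp (-(lam ^ 2 * Real.pi) *
            (x i - max 0 (min (x i) (s i))) ^ 2) := by
    intro x
    rw [key x, ← Real.exp_sum]
    congr 1
    rw [Finset.mul_sum]
    exact Finset.sum_congr rfl fun j _ => by ring
  simp_rw [hrw]
  -- transfer to the product measure
  have hmp := (EuclideanSpace.volume_preserving_symm_measurableEquiv_toLp (Fin n)).symm
  rw [← hmp.integral_comp (MeasurableEquiv.measurableEmbedding _)]
  have heq : ∀ (y : Fin n → ℝ) (i : Fin n),
      ((MeasurableEquiv.toLp 2 (Fin n → ℝ)).symm.symm y) i = y i := fun y i => rfl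
  simp only [heq]
  rw [MeasureTheory.volume_pi, MeasureTheory.integral_fintype_prod_eq_prod (ι := Fin n)
    (f := fun i (t : ℝ) => Real.exp (-(lam ^ 2 * Real.pi) * (t - max 0 (min t (s i))) ^ 2))]
  have ha : 0 < lam ^ 2 * Real.pi := by positivity
  have hval : ∀ i : Fin n,
      (∫ t : ℝ, Real.exp (-(lam ^ 2 * Real.pi) * (t - max 0 (min t (s i))) ^ 2))
        = s i + 1 / lam := by
    intro i
    rw [oneDim_integral _ ha (hs i)]
    congr 1
    rw [show Real.pi / (lam ^ 2 * Real.pi) = (1 / lam) ^ 2 by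
      field_simp [Real.pi_ne_zero]]
    exact Real.sqrt_sq (by positivity)
  simp_rw [hval]
  have : ∀ i : Fin n, s i + 1 / lam = 1 / lam * (1 + lam * s i) := by
    intro i; field_simp; ring
  simp_rw [this]
  rw [Finset.prod_mul_distrib, Finset.prod_const]
  congr 1
  rw [zpow_neg, zpow_natCast, Finset.card_univ, Fintype.card_fin, one_div, inv_pow]
end

section
/- Let $Z$ be a random variable taking values in $\{0, 1, \dots, n\}$ whose distribution is $\mathbb{P}(Z = j) = \binom{n}{j} p^j (1-p)^{n-j}$ (binomial with parameters $n$ and $p \in [0,1]$). Then the entropy $\mathrm{Ent}[Z] = -\sum_j \mathbb{P}(Z=j)\log\mathbb{P}(Z=j)$ is maximized over $p \in [0,1]$ at $p = 1/2$, i.e., $\mathrm{Ent}[\mathrm{Bin}(p,n)] \leq \mathrm{Ent}[\mathrm{Bin}(1/2,n)]$ for all $p \in [0,1]$. -/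
open Finset Real

noncomputable def w (m k : ℕ) (t : ℝ) : ℝ := (m.choose k : ℝ) * t ^ k * (1 - t) ^ (m - k)

lemma sum_w_one (m : ℕ) (x : ℝ) : ∑ k ∈ Finset.range (m+1), w m k x = 1 := by
  have h := add_pow x (1-x) m
  have hx : x + (1 - x) = (1:ℝ) := by ring
  rw [hx, one_pow] at h
  rw [h]
  exact Finset.sum_congr rfl fun k _ => by unfold w; ring

lemma choose_mul_eq (m k : ℕ) (hk : k < m) :
    m * (m-1).choose k = m.choose (k+1) * (k+1) := by
  obtain ⟨m', rfl⟩ : ∃ m', m = m' + 1 := ⟨m-1, by omega⟩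
  simpa [Nat.succ_eq_add_one] using Nat.add_one_mul_choose_eq m' k

lemma wsum_deriv_eq (m : ℕ) (g : ℕ → ℝ) (x : ℝ) :
    ∑ k ∈ Finset.range (m+1), (m.choose k : ℝ) * g k *
        ((k : ℝ) * x^(k-1) * (1-x)^(m-k) - ((m-k : ℕ) : ℝ) * x^k * (1-x)^(m-k-1))
    = (m : ℝ) * ∑ k ∈ Finset.range m, w (m-1) k x * (g (k+1) - g k) := by
  have hsplit : ∑ k ∈ Finset.range (m+1), (m.choose k : ℝ) * g k *
        ((k : ℝ) * x^(k-1) * (1-x)^(m-k) - ((m-k : ℕ) : ℝ) * x^k * (1-x)^(m-k-1))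
      = (∑ k ∈ Finset.range (m+1), (m.choose k : ℝ) * g k * ((k : ℝ) * x^(k-1) * (1-x)^(m-k)))
        - ∑ k ∈ Finset.range (m+1), (m.choose k : ℝ) * g k * (((m-k : ℕ) : ℝ) * x^k * (1-x)^(m-k-1)) := by
    rw [← Finset.sum_sub_distrib]
    exact Finset.sum_congr rfl fun k _ => by ring
  rw [hsplit]
  have hA : (∑ k ∈ Finset.range (m+1), (m.choose k : ℝ) * g k * ((k : ℝ) * x^(k-1) * (1-x)^(m-k)))
      = ∑ k ∈ Finset.range m, (m : ℝ) * (w (m-1) k x * g (k+1)) := by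
    rw [Finset.sum_range_succ']
    simp only [Nat.cast_zero, zero_mul, mul_zero, add_zero]
    refine Finset.sum_congr rfl fun k hk => ?_
    have hk' : k < m := Finset.mem_range.mp hk
    have e : (m.choose (k+1) : ℝ) * ((k:ℝ)+1) = (m : ℝ) * ((m-1).choose k : ℝ) := by
      exact_mod_cast (choose_mul_eq m k hk').symm
    unfold w
    rw [show k + 1 - 1 = k from rfl, show m - (k+1) = m - 1 - k by omega]
    push_cast
    linear_combination (g (k+1) * x^k * (1-x)^(m-1-k)) * e
  have hB : (∑ k ∈ Finset.range (m+1), (m.choose k : ℝ) * g k * (((m-k : ℕ) : ℝ) * x^k * (1-x)^(m-k-1)))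
      = ∑ k ∈ Finset.range m, (m : ℝ) * (w (m-1) k x * g k) := by
    rw [Finset.sum_range_succ]
    simp only [Nat.sub_self, Nat.cast_zero, zero_mul, mul_zero, add_zero]
    refine Finset.sum_congr rfl fun k hk => ?_
    have hk' : k < m := Finset.mem_range.mp hk
    have e : (m.choose (k+1) : ℝ) * ((k:ℝ)+1) = (m : ℝ) * ((m-1).choose k : ℝ) := by
      exact_mod_cast (choose_mul_eq m k hk').symm
    have e2 : (m.choose k : ℝ) * ((m-k : ℕ) : ℝ) = (m : ℝ) * ((m-1).choose k : ℝ) := by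
      rw [← e]
      have := Nat.choose_succ_right_eq m k
      have : (m.choose (k+1) : ℝ) * ((k:ℝ)+1) = (m.choose k : ℝ) * ((m - k : ℕ) : ℝ) := by
        exact_mod_cast this
      linarith [this]
    unfold w
    rw [show m - k - 1 = m - 1 - k by omega]
    linear_combination (g k * x^k * (1-x)^(m-1-k)) * e2
  rw [hA, hB, ← Finset.sum_sub_distrib, Finset.mul_sum]
  exact Finset.sum_congr rfl fun k _ => by ring

lemma hasDerivAt_wsum (m : ℕ) (g : ℕ → ℝ) (x : ℝ) :
    HasDerivAt (fun t => ∑ k ∈ Finset.range (m+1), w m k t * g k)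
      ((m : ℝ) * ∑ k ∈ Finset.range m, w (m-1) k x * (g (k+1) - g k)) x := by
  rw [← wsum_deriv_eq m g x]
  apply HasDerivAt.fun_sum
  intro k _
  have h1 : HasDerivAt (fun t : ℝ => t^k) ((k:ℝ) * x^(k-1)) x := hasDerivAt_pow k x
  have h0 : HasDerivAt (fun t : ℝ => 1 - t) (-1) x := by
    simpa using (hasDerivAt_id x).const_sub (1:ℝ)
  have h2 : HasDerivAt (fun t : ℝ => (1-t)^(m-k)) (-(((m-k : ℕ):ℝ) * (1-x)^(m-k-1))) x := by
    have := (hasDerivAt_pow (m-k) (1-x)).comp x h0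
    refine this.congr_deriv ?_
    ring
  have h4 := ((h1.mul h2).const_mul ((m.choose k : ℕ) : ℝ)).mul_const (g k)
  have heq : (fun t : ℝ => w m k t * g k)
      = fun t : ℝ => ((m.choose k : ℕ) : ℝ) * (t^k * (1-t)^(m-k)) * g k := by
    funext t; unfold w; ring
  rw [heq]
  refine h4.congr_deriv ?_
  ring


noncomputable def fln (m : ℕ) : ℝ → ℝ :=
  fun t => ∑ k ∈ Finset.range (m+1), w m k t * Real.log ((k:ℝ)+1)

noncomputable def psi (m : ℕ) : ℝ → ℝ := fun t => Real.log t - fln m t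

lemma hasDerivAt_fln (m : ℕ) (x : ℝ) :
    HasDerivAt (fln m)
      ((m : ℝ) * ∑ k ∈ Finset.range m, w (m-1) k x *
        (Real.log ((k:ℝ)+2) - Real.log ((k:ℝ)+1))) x := by
  have h := hasDerivAt_wsum m (fun k => Real.log ((k:ℝ)+1)) x
  unfold fln
  convert h using 2
  apply Finset.sum_congr rfl
  intro k _
  push_cast
  ring_nf

lemma w_nonneg (m k : ℕ) {t : ℝ} (h0 : 0 ≤ t) (h1 : t ≤ 1) : 0 ≤ w m k t := by
  unfold w
  have : (0:ℝ) ≤ 1 - t := by linarith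
  positivity

lemma fln_deriv_le (m : ℕ) (x : ℝ) (hx0 : 0 < x) (hx1 : x < 1) :
    (m : ℝ) * ∑ k ∈ Finset.range m, w (m-1) k x *
        (Real.log ((k:ℝ)+2) - Real.log ((k:ℝ)+1)) ≤ x⁻¹ := by
  have step1 : ∀ k ∈ Finset.range m,
      (m:ℝ) * (w (m-1) k x * (Real.log ((k:ℝ)+2) - Real.log ((k:ℝ)+1)))
        ≤ w m (k+1) x * x⁻¹ := by
    intro k hk
    have hk' : k < m := Finset.mem_range.mp hk
    have hlog : Real.log ((k:ℝ)+2) - Real.log ((k:ℝ)+1) ≤ 1/((k:ℝ)+1) := by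
      have hpos : (0:ℝ) < ((k:ℝ)+2)/((k:ℝ)+1) := by positivity
      have h := Real.log_le_sub_one_of_pos hpos
      rw [Real.log_div (by positivity) (by positivity)] at h
      have : ((k:ℝ)+2)/((k:ℝ)+1) - 1 = 1/((k:ℝ)+1) := by field_simp; norm_num
      linarith [h, this.le]
    have hwn : 0 ≤ w (m-1) k x := w_nonneg _ _ hx0.le hx1.le
    have hm0 : (0:ℝ) ≤ (m:ℝ) := by positivity
    have key : (m:ℝ) * (w (m-1) k x * (1/((k:ℝ)+1))) = w m (k+1) x * x⁻¹ := by
      have e : ((m.choose (k+1) : ℕ) : ℝ) * ((k:ℝ)+1) = (m:ℝ) * (((m-1).choose k : ℕ) : ℝ) := by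
        exact_mod_cast (choose_mul_eq m k hk').symm
      unfold w
      rw [show m - (k+1) = m - 1 - k by omega]
      have hk1 : ((k:ℝ)+1) ≠ 0 := by positivity
      field_simp
      linear_combination (-(x^(k+1) * (1-x)^(m-1-k))) * e
    calc (m:ℝ) * (w (m-1) k x * (Real.log ((k:ℝ)+2) - Real.log ((k:ℝ)+1)))
        ≤ (m:ℝ) * (w (m-1) k x * (1/((k:ℝ)+1))) := by
          apply mul_le_mul_of_nonneg_left _ hm0
          exact mul_le_mul_of_nonneg_left hlog hwn
      _ = w m (k+1) x * x⁻¹ := key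
  have step2 : (m : ℝ) * ∑ k ∈ Finset.range m, w (m-1) k x *
        (Real.log ((k:ℝ)+2) - Real.log ((k:ℝ)+1))
      ≤ ∑ k ∈ Finset.range m, w m (k+1) x * x⁻¹ := by
    rw [Finset.mul_sum]
    exact Finset.sum_le_sum step1
  have step3 : ∑ k ∈ Finset.range m, w m (k+1) x = 1 - w m 0 x := by
    have := sum_w_one m x
    rw [Finset.sum_range_succ'] at this
    linarith
  have step4 : ∑ k ∈ Finset.range m, w m (k+1) x * x⁻¹ ≤ x⁻¹ := by
    rw [← Finset.sum_mul, step3]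
    have hw0 : 0 ≤ w m 0 x := w_nonneg _ _ hx0.le hx1.le
    have hxinv : (0:ℝ) ≤ x⁻¹ := by positivity
    nlinarith
  linarith

lemma psi_mono (m : ℕ) {a b : ℝ} (ha : 0 < a) (hb : b < 1) (hab : a ≤ b) :
    psi m a ≤ psi m b := by
  have hasD : ∀ x : ℝ, 0 < x → HasDerivAt (psi m)
      (x⁻¹ - (m : ℝ) * ∑ k ∈ Finset.range m, w (m-1) k x *
        (Real.log ((k:ℝ)+2) - Real.log ((k:ℝ)+1))) x := by
    intro x hx
    exact (Real.hasDerivAt_log hx.ne').sub (hasDerivAt_fln m x)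
  have hmono : MonotoneOn (psi m) (Set.Icc a b) := by
    apply monotoneOn_of_deriv_nonneg (convex_Icc a b)
    · intro x hx
      exact ((hasD x (lt_of_lt_of_le ha hx.1)).continuousAt).continuousWithinAt
    · intro x hx
      rw [interior_Icc] at hx
      exact ((hasD x (ha.trans hx.1)).differentiableAt).differentiableWithinAt
    · intro x hx
      rw [interior_Icc] at hx
      have hx0 : 0 < x := ha.trans hx.1
      have hx1 : x < 1 := lt_of_lt_of_le hx.2 (le_of_lt hb) |>.trans_le le_rfl
      rw [(hasD x hx0).deriv]
      have := fln_deriv_le m x hx0 hx1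
      linarith
  exact hmono (Set.left_mem_Icc.mpr hab) (Set.right_mem_Icc.mpr hab) hab


noncomputable def phi (n : ℕ) : ℝ → ℝ :=
  fun t => ∑ j ∈ Finset.range (n+1), w n j t * Real.log ((n.choose j : ℕ) : ℝ)

noncomputable def G (n : ℕ) : ℝ → ℝ :=
  fun t => (n:ℝ) * (-(t * Real.log t) - (1-t) * Real.log (1-t)) - phi n t

lemma sum_jw (n : ℕ) (x : ℝ) : ∑ j ∈ Finset.range (n+1), (j:ℝ) * w n j x = n * x := by
  cases n with
  | zero => simp
  | succ m =>
    rw [Finset.sum_range_succ']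
    simp only [Nat.cast_zero, zero_mul, add_zero]
    have hc : ∀ k ∈ Finset.range (m+1),
        ((k+1 : ℕ):ℝ) * w (m+1) (k+1) x = (((m+1 : ℕ):ℝ) * x) * w m k x := by
      intro k hk
      have e : (m+1) * m.choose k = (m+1).choose (k+1) * (k+1) := by
        simpa [Nat.succ_eq_add_one] using Nat.add_one_mul_choose_eq m k
      have e' : (((m+1).choose (k+1) : ℕ) : ℝ) * ((k:ℝ)+1) = ((m+1 : ℕ):ℝ) * ((m.choose k : ℕ):ℝ) := by
        exact_mod_cast e.symm
      unfold w
      rw [show m + 1 - (k+1) = m - k by omega]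
      push_cast
      push_cast at e'
      linear_combination (x^(k+1) * (1-x)^(m-k)) * e'
    rw [Finset.sum_congr rfl hc, ← Finset.mul_sum, sum_w_one, mul_one]

lemma sum_njw (n : ℕ) (x : ℝ) :
    ∑ j ∈ Finset.range (n+1), ((n-j : ℕ):ℝ) * w n j x = n * (1-x) := by
  have hrefl := Finset.sum_range_reflect (fun j => ((n-j : ℕ):ℝ) * w n j x) (n+1)
  rw [← hrefl]
  have hc : ∀ j ∈ Finset.range (n+1),
      ((n - (n+1-1-j) : ℕ):ℝ) * w n (n+1-1-j) x = (j:ℝ) * w n j (1-x) := by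
    intro j hj
    have hj' : j ≤ n := by have := Finset.mem_range.mp hj; omega
    rw [show n+1-1-j = n-j by omega, show n - (n-j) = j by omega]
    unfold w
    rw [Nat.choose_symm hj', show n - (n - j) = j by omega, sub_sub_cancel]
    ring
  rw [Finset.sum_congr rfl hc, sum_jw]

lemma ent_eq_G (n : ℕ) (x : ℝ) (hx0 : 0 < x) (hx1 : x < 1) :
    -(∑ j ∈ Finset.range (n+1), ((n.choose j : ℝ) * x ^ j * (1 - x) ^ (n - j)) *
        Real.log ((n.choose j : ℝ) * x ^ j * (1 - x) ^ (n - j)))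
    = G n x := by
  have hterm : ∀ j ∈ Finset.range (n+1),
      ((n.choose j : ℝ) * x ^ j * (1 - x) ^ (n - j)) *
        Real.log ((n.choose j : ℝ) * x ^ j * (1 - x) ^ (n - j))
      = w n j x * Real.log ((n.choose j : ℕ):ℝ)
        + ((j:ℝ) * w n j x) * Real.log x + (((n-j:ℕ):ℝ) * w n j x) * Real.log (1-x) := by
    intro j hj
    have hj' : j ≤ n := by have := Finset.mem_range.mp hj; omega
    have hC : ((n.choose j : ℕ):ℝ) ≠ 0 := by
      exact_mod_cast (Nat.choose_pos hj').ne'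
    have hxj : x ^ j ≠ 0 := pow_ne_zero _ hx0.ne'
    have hq : (1-x) ^ (n-j) ≠ 0 := pow_ne_zero _ (by intro h; nlinarith [h] : (1:ℝ) - x ≠ 0)
    rw [Real.log_mul (mul_ne_zero hC hxj) hq, Real.log_mul hC hxj, Real.log_pow, Real.log_pow]
    unfold w
    ring
  rw [Finset.sum_congr rfl hterm, Finset.sum_add_distrib, Finset.sum_add_distrib,
    ← Finset.sum_mul, ← Finset.sum_mul, sum_jw, sum_njw]
  unfold G phi
  ring

lemma hasDerivAt_G (n : ℕ) (x : ℝ) (hx0 : 0 < x) (hx1 : x < 1) :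
    HasDerivAt (G n) ((n:ℝ) * (Real.log (1-x) - Real.log x) -
      (n : ℝ) * ∑ k ∈ Finset.range n, w (n-1) k x *
        (Real.log ((n.choose (k+1) : ℕ):ℝ) - Real.log ((n.choose k : ℕ):ℝ))) x := by
  have h1x : (0:ℝ) < 1 - x := by linarith
  have hA : HasDerivAt (fun t:ℝ => t * Real.log t) (Real.log x + 1) x := by
    have := (hasDerivAt_id x).mul (Real.hasDerivAt_log hx0.ne')
    refine this.congr_deriv ?_
    simp only [id]
    field_simp
  have h0 : HasDerivAt (fun t : ℝ => 1 - t) (-1) x := by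
    simpa using (hasDerivAt_id x).const_sub (1:ℝ)
  have hB : HasDerivAt (fun t:ℝ => (1-t) * Real.log (1-t)) (-(Real.log (1-x) + 1)) x := by
    have hA1 : HasDerivAt (fun s:ℝ => s * Real.log s) (Real.log (1-x) + 1) (1-x) := by
      have := (hasDerivAt_id (1-x)).mul (Real.hasDerivAt_log h1x.ne')
      refine this.congr_deriv ?_
      simp only [id]
      field_simp
    have := hA1.comp x h0
    refine this.congr_deriv ?_
    ring
  have hphi : HasDerivAt (phi n) ((n : ℝ) * ∑ k ∈ Finset.range n, w (n-1) k x *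
      (Real.log ((n.choose (k+1) : ℕ):ℝ) - Real.log ((n.choose k : ℕ):ℝ))) x := by
    unfold phi
    exact hasDerivAt_wsum n (fun j => Real.log ((n.choose j : ℕ):ℝ)) x
  have hG := ((hA.neg.sub hB).const_mul (n:ℝ)).sub hphi
  have hfun : (fun t:ℝ => (n:ℝ) * (-(t * Real.log t) - (1-t) * Real.log (1-t)) - phi n t) = G n := by
    funext t; rfl
  rw [← hfun]
  refine hG.congr_deriv ?_
  ring

lemma Gderiv_eq (n : ℕ) (hn : 1 ≤ n) (x : ℝ) (hx0 : 0 < x) (hx1 : x < 1) :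
    (n:ℝ) * (Real.log (1-x) - Real.log x) -
      (n : ℝ) * ∑ k ∈ Finset.range n, w (n-1) k x *
        (Real.log ((n.choose (k+1) : ℕ):ℝ) - Real.log ((n.choose k : ℕ):ℝ))
    = (n:ℝ) * (psi (n-1) (1-x) - psi (n-1) x) := by
  have hstep : ∀ k ∈ Finset.range n,
      w (n-1) k x * (Real.log ((n.choose (k+1) : ℕ):ℝ) - Real.log ((n.choose k : ℕ):ℝ))
      = w (n-1) k x * Real.log ((n-k : ℕ):ℝ) - w (n-1) k x * Real.log ((k:ℝ)+1) := by
    intro k hk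
    have hk' : k < n := Finset.mem_range.mp hk
    have e := Nat.choose_succ_right_eq n k
    have h1 : ((n.choose (k+1) : ℕ):ℝ) ≠ 0 := by
      exact_mod_cast (Nat.choose_pos (by omega : k+1 ≤ n)).ne'
    have h2 : ((k+1 : ℕ):ℝ) ≠ 0 := by positivity
    have h3 : ((n.choose k : ℕ):ℝ) ≠ 0 := by
      exact_mod_cast (Nat.choose_pos (by omega : k ≤ n)).ne'
    have h4 : ((n-k : ℕ):ℝ) ≠ 0 := by
      have : 0 < n - k := by omega
      exact_mod_cast this.ne'
    have he : ((n.choose (k+1) : ℕ):ℝ) * ((k+1 : ℕ):ℝ) = ((n.choose k : ℕ):ℝ) * ((n-k : ℕ):ℝ) := by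
      exact_mod_cast e
    have hlog := congrArg Real.log he
    rw [Real.log_mul h1 h2, Real.log_mul h3 h4] at hlog
    have hc : Real.log ((k+1:ℕ):ℝ) = Real.log ((k:ℝ)+1) := by push_cast; ring_nf
    rw [hc] at hlog
    have hdiff : Real.log ((n.choose (k+1) : ℕ):ℝ) - Real.log ((n.choose k : ℕ):ℝ)
        = Real.log ((n-k : ℕ):ℝ) - Real.log ((k:ℝ)+1) := by linarith
    rw [hdiff]
    ring
  rw [Finset.sum_congr rfl hstep, Finset.sum_sub_distrib]
  have hrlog : ∑ k ∈ Finset.range n, w (n-1) k x * Real.log ((n-k:ℕ):ℝ) = fln (n-1) (1-x) := by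
    have hrefl := Finset.sum_range_reflect (fun k => w (n-1) k x * Real.log ((n-k:ℕ):ℝ)) n
    rw [← hrefl]
    unfold fln
    rw [show n - 1 + 1 = n by omega]
    apply Finset.sum_congr rfl
    intro j hj
    have hj' : j < n := Finset.mem_range.mp hj
    rw [show n - (n-1-j) = j+1 by omega]
    unfold w
    rw [show n - 1 - (n - 1 - j) = j by omega, Nat.choose_symm (by omega : j ≤ n-1),
      sub_sub_cancel]
    push_cast
    ring
  have hflnx : ∑ k ∈ Finset.range n, w (n-1) k x * Real.log ((k:ℝ)+1) = fln (n-1) x := by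
    unfold fln
    rw [show n - 1 + 1 = n by omega]
  rw [hrlog, hflnx]
  unfold psi
  ring


lemma half_sum_nonpos (n : ℕ) :
    (∑ j ∈ Finset.range (n + 1),
        ((n.choose j : ℝ) * (1 / 2 : ℝ) ^ j * (1 - 1 / 2 : ℝ) ^ (n - j)) *
          Real.log ((n.choose j : ℝ) * (1 / 2 : ℝ) ^ j * (1 - 1 / 2 : ℝ) ^ (n - j))) ≤ 0 := by
  apply Finset.sum_nonpos
  intro j hj
  have hj' : j ≤ n := by have := Finset.mem_range.mp hj; omega
  set q : ℝ := (n.choose j : ℝ) * (1 / 2 : ℝ) ^ j * (1 - 1 / 2 : ℝ) ^ (n - j) with hq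
  have hq0 : 0 ≤ q := by rw [hq]; positivity
  have hq1 : q ≤ 1 := by
    have hC : (n.choose j : ℝ) ≤ 2 ^ n := by
      have h1 : n.choose j ≤ 2 ^ n := by
        calc n.choose j ≤ ∑ i ∈ Finset.range (n+1), n.choose i :=
              Finset.single_le_sum (fun i _ => Nat.zero_le _) hj
          _ = 2 ^ n := Nat.sum_range_choose n
      exact_mod_cast h1
    have hpow : (1/2 : ℝ) ^ j * (1 - 1/2 : ℝ) ^ (n - j) = (1/2 : ℝ) ^ n := by
      norm_num
      rw [← pow_add]
      congr 1
      omega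
    rw [hq, mul_assoc, hpow]
    have h2 : (0:ℝ) < (1/2:ℝ)^n := by positivity
    calc (n.choose j : ℝ) * (1/2:ℝ)^n ≤ 2^n * (1/2:ℝ)^n := by nlinarith
      _ = 1 := by rw [← mul_pow]; norm_num
  have hlog : Real.log q ≤ 0 := Real.log_nonpos hq0 hq1
  exact mul_nonpos_iff.mpr (Or.inl ⟨hq0, hlog⟩)

lemma zero_sum (n : ℕ) :
    (∑ j ∈ Finset.range (n + 1),
        ((n.choose j : ℝ) * (0:ℝ) ^ j * (1 - 0 : ℝ) ^ (n - j)) *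
          Real.log ((n.choose j : ℝ) * (0:ℝ) ^ j * (1 - 0 : ℝ) ^ (n - j))) = 0 := by
  apply Finset.sum_eq_zero
  intro j _
  cases j with
  | zero => simp
  | succ i => simp

lemma key (n : ℕ) (p : ℝ) (hp0 : 0 ≤ p) (hp2 : p ≤ 1/2) :
    -(∑ j ∈ Finset.range (n + 1),
        ((n.choose j : ℝ) * p ^ j * (1 - p) ^ (n - j)) *
          Real.log ((n.choose j : ℝ) * p ^ j * (1 - p) ^ (n - j)))
      ≤
    -(∑ j ∈ Finset.range (n + 1),
        ((n.choose j : ℝ) * (1 / 2 : ℝ) ^ j * (1 - 1 / 2 : ℝ) ^ (n - j)) *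
          Real.log ((n.choose j : ℝ) * (1 / 2 : ℝ) ^ j * (1 - 1 / 2 : ℝ) ^ (n - j))) := by
  rcases eq_or_lt_of_le hp0 with rfl | hpos
  · rw [zero_sum n, neg_zero, neg_nonneg]
    exact half_sum_nonpos n
  · cases n with
    | zero => norm_num
    | succ m =>
      rw [ent_eq_G (m+1) p hpos (by linarith), ent_eq_G (m+1) (1/2) (by norm_num) (by norm_num)]
      have hmono : MonotoneOn (G (m+1)) (Set.Icc p (1/2)) := by
        apply monotoneOn_of_deriv_nonneg (convex_Icc _ _)
        · intro x hx
          have hx0 : 0 < x := lt_of_lt_of_le hpos hx.1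
          have hx1 : x < 1 := by have := hx.2; linarith
          exact (hasDerivAt_G (m+1) x hx0 hx1).continuousAt.continuousWithinAt
        · intro x hx
          rw [interior_Icc] at hx
          have hx0 : 0 < x := hpos.trans hx.1
          have hx1 : x < 1 := by have := hx.2; linarith
          exact (hasDerivAt_G (m+1) x hx0 hx1).differentiableAt.differentiableWithinAt
        · intro x hx
          rw [interior_Icc] at hx
          have hx0 : 0 < x := hpos.trans hx.1
          have hx2 : x < 1/2 := hx.2
          have hx1 : x < 1 := by linarith
          rw [(hasDerivAt_G (m+1) x hx0 hx1).deriv, Gderiv_eq (m+1) (by omega) x hx0 hx1]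
          have hpsi := psi_mono (m+1-1) hx0 (by linarith : (1:ℝ) - x < 1)
            (by linarith : x ≤ 1 - x)
          have hn0 : (0:ℝ) ≤ ((m+1 : ℕ):ℝ) := by positivity
          nlinarith [hpsi]
      exact hmono ⟨le_refl _, hp2⟩ ⟨hp2, le_refl _⟩ hp2

lemma ent_symm (n : ℕ) (p : ℝ) :
    (∑ j ∈ Finset.range (n + 1),
        ((n.choose j : ℝ) * p ^ j * (1 - p) ^ (n - j)) *
          Real.log ((n.choose j : ℝ) * p ^ j * (1 - p) ^ (n - j)))
    = ∑ j ∈ Finset.range (n + 1),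
        ((n.choose j : ℝ) * (1-p) ^ j * (1 - (1-p)) ^ (n - j)) *
          Real.log ((n.choose j : ℝ) * (1-p) ^ j * (1 - (1-p)) ^ (n - j)) := by
  have hrefl := Finset.sum_range_reflect
    (fun j => ((n.choose j : ℝ) * (1-p) ^ j * (1 - (1-p)) ^ (n - j)) *
      Real.log ((n.choose j : ℝ) * (1-p) ^ j * (1 - (1-p)) ^ (n - j))) (n+1)
  rw [← hrefl]
  apply Finset.sum_congr rfl
  intro j hj
  have hj' : j ≤ n := by have := Finset.mem_range.mp hj; omega
  rw [show n + 1 - 1 - j = n - j by omega, Nat.choose_symm hj',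
    show n - (n-j) = j by omega, sub_sub_cancel]
  rw [show (n.choose j : ℝ) * (1-p) ^ (n-j) * p ^ j
      = (n.choose j : ℝ) * p ^ j * (1 - p) ^ (n - j) by ring]

/-- Among binomial distributions `Bin(p, n)` with `p ∈ [0,1]`, the entropy
`-∑ q_j log q_j` is maximized at `p = 1/2`. -/
theorem binomial_entropy_maximized_at_half (n : ℕ) (p : ℝ)
    (hp0 : 0 ≤ p) (hp1 : p ≤ 1) :
    -(∑ j ∈ Finset.range (n + 1),
        ((n.choose j : ℝ) * p ^ j * (1 - p) ^ (n - j)) *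
          Real.log ((n.choose j : ℝ) * p ^ j * (1 - p) ^ (n - j)))
      ≤
    -(∑ j ∈ Finset.range (n + 1),
        ((n.choose j : ℝ) * (1 / 2 : ℝ) ^ j * (1 - 1 / 2 : ℝ) ^ (n - j)) *
          Real.log ((n.choose j : ℝ) * (1 / 2 : ℝ) ^ j * (1 - 1 / 2 : ℝ) ^ (n - j))) := by
  rcases le_or_gt p (1/2) with h | h
  · exact key n p hp0 h
  · rw [ent_symm n p]
    exact key n (1-p) (by linarith) (by linarith)
end
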